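/- Let G be connected with a closed labeling. The quotient graph G/∼ on the exchangeability classes E_1 < ... < E_r, with {E_a, E_b} an edge iff some (equivalently, every) i ∈ E_a, j ∈ E_b satisfy {i,j} ∈ E(G), is connected, collapsed, and closed with respect to the induced labeling. -/

import Mathlib

def IsClosedLabeling {n : ℕ} (G : SimpleGraph (Fin n)) : Prop :=
  ∀ u v w : Fin n, G.Adj v u → G.Adj v w → u ≠ w →
    ((v < u ∧ v < w) ∨ (u < v ∧ w < v)) → G.Adj u w

def fullNbhd {V : Type*} (G : SimpleGraph V) (v : V) : Set V :=
  {v} ∪ G.neighborSet v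

def exchClasses {n : ℕ} (G : SimpleGraph (Fin n)) : Set (Set (Fin n)) :=
  {S | ∃ v : Fin n, S = {w : Fin n | fullNbhd G w = fullNbhd G v}}

/-- The quotient graph `G/∼` on the exchangeability classes. -/
def quotientGraph {n : ℕ} (G : SimpleGraph (Fin n)) : SimpleGraph (exchClasses G) where
  Adj A B := A ≠ B ∧ ∃ a ∈ (A : Set (Fin n)), ∃ b ∈ (B : Set (Fin n)), G.Adj a b
  symm := by
    constructor
    rintro A B ⟨h, a, ha, b, hb, hab⟩
    exact ⟨h.symm, b, hb, a, ha, hab.symm⟩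
  loopless := by constructor; rintro A ⟨h, -⟩; exact h rfl

/-- Closedness of a graph with respect to an arbitrary strict order relation on
its vertices. -/
def IsClosedWrt {V : Type*} (G : SimpleGraph V) (lt : V → V → Prop) : Prop :=
  ∀ u v w : V, G.Adj v u → G.Adj v w → u ≠ w →
    ((lt v u ∧ lt v w) ∨ (lt u v ∧ lt w v)) → G.Adj u w

section Aux
variable {n : ℕ} {G : SimpleGraph (Fin n)}

lemma mem_fullNbhd_iff {V : Type*} {H : SimpleGraph V} {a x : V} :
    x ∈ fullNbhd H a ↔ x = a ∨ H.Adj a x := by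
  simp [fullNbhd, SimpleGraph.mem_neighborSet, eq_comm]

def cls (G : SimpleGraph (Fin n)) (v : Fin n) : exchClasses G :=
  ⟨{w : Fin n | fullNbhd G w = fullNbhd G v}, v, rfl⟩

lemma mem_cls (v : Fin n) : v ∈ (cls G v : Set (Fin n)) := rfl

lemma fN_eq_of_mem {A : exchClasses G} {a b : Fin n} (ha : a ∈ (A : Set (Fin n)))
    (hb : b ∈ (A : Set (Fin n))) : fullNbhd G a = fullNbhd G b := by
  obtain ⟨v, hv⟩ := A.2
  rw [hv] at ha hb
  exact ha.trans hb.symm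

lemma classes_eq_of_mem {A B : exchClasses G} {a : Fin n} (ha : a ∈ (A : Set (Fin n)))
    (hb : a ∈ (B : Set (Fin n))) : A = B := by
  obtain ⟨v, hv⟩ := A.2
  obtain ⟨w, hw⟩ := B.2
  apply Subtype.ext
  rw [hv] at ha ⊢; rw [hw] at hb ⊢
  ext x
  constructor
  · intro hx
    exact Set.mem_setOf.mpr ((Set.mem_setOf.mp hx).trans (ha.symm.trans hb))
  · intro hx
    exact Set.mem_setOf.mpr ((Set.mem_setOf.mp hx).trans (hb.symm.trans ha))

lemma sameclass_adj {a b : Fin n} (h : fullNbhd G a = fullNbhd G b) (hne : a ≠ b) :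
    G.Adj a b := by
  have hb : b ∈ fullNbhd G a := h ▸ (mem_fullNbhd_iff.mpr (Or.inl rfl))
  rcases mem_fullNbhd_iff.mp hb with h' | h'
  · exact absurd h'.symm hne
  · exact h'

lemma adj_move {a a' b : Fin n} (h : fullNbhd G a = fullNbhd G a') (hab : G.Adj a b)
    (hne : a' ≠ b) : G.Adj a' b := by
  have hb : b ∈ fullNbhd G a' := h ▸ (mem_fullNbhd_iff.mpr (Or.inr hab))
  rcases mem_fullNbhd_iff.mp hb with h' | h'
  · exact absurd h'.symm hne
  · exact h'

lemma all_adj {A B : exchClasses G} (h : (quotientGraph G).Adj A B) :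
    ∀ a ∈ (A : Set (Fin n)), ∀ b ∈ (B : Set (Fin n)), G.Adj a b := by
  obtain ⟨hne, a0, ha0, b0, hb0, hadj⟩ := h
  intro a ha b hb
  have hab0 : a ≠ b0 := fun e => hne (classes_eq_of_mem ha (e ▸ hb0))
  have h1 : G.Adj a b0 := adj_move (fN_eq_of_mem ha0 ha) hadj hab0
  have hba : b ≠ a := fun e => hne (classes_eq_of_mem (e ▸ ha) hb)
  exact (adj_move (fN_eq_of_mem hb0 hb) h1.symm hba).symm

lemma reach_cls {a b : Fin n} (h : G.Adj a b) :
    (quotientGraph G).Reachable (cls G a) (cls G b) := by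
  by_cases hc : cls G a = cls G b
  · exact hc ▸ SimpleGraph.Reachable.refl _
  · exact SimpleGraph.Adj.reachable ⟨hc, a, mem_cls a, b, mem_cls b, h⟩

lemma reach_walk : ∀ {v w : Fin n}, G.Walk v w →
    (quotientGraph G).Reachable (cls G v) (cls G w)
  | _, _, SimpleGraph.Walk.nil => SimpleGraph.Reachable.refl _
  | _, _, SimpleGraph.Walk.cons h p => (reach_cls h).trans (reach_walk p)

lemma key_subset {A B : exchClasses G}
    (hfn : fullNbhd (quotientGraph G) A = fullNbhd (quotientGraph G) B)
    (hadj : (quotientGraph G).Adj A B) {a b : Fin n}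
    (ha : a ∈ (A : Set (Fin n))) (hb : b ∈ (B : Set (Fin n))) :
    fullNbhd G a ⊆ fullNbhd G b := by
  intro x hx
  rcases mem_fullNbhd_iff.mp hx with rfl | hax
  · exact mem_fullNbhd_iff.mpr (Or.inr (all_adj hadj.symm b hb x ha))
  · by_cases hCB : cls G x = B
    · have hxB : x ∈ (B : Set (Fin n)) := hCB ▸ mem_cls x
      by_cases hxb : x = b
      · exact mem_fullNbhd_iff.mpr (Or.inl hxb)
      · exact mem_fullNbhd_iff.mpr
          (Or.inr (sameclass_adj (fN_eq_of_mem hb hxB) (Ne.symm hxb)))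
    · by_cases hCA : cls G x = A
      · have hxA : x ∈ (A : Set (Fin n)) := hCA ▸ mem_cls x
        exact mem_fullNbhd_iff.mpr (Or.inr (all_adj hadj.symm b hb x hxA))
      · have hAC : (quotientGraph G).Adj A (cls G x) :=
          ⟨fun e => hCA e.symm, a, ha, x, mem_cls x, hax⟩
        have hmem : cls G x ∈ fullNbhd (quotientGraph G) B :=
          hfn ▸ (mem_fullNbhd_iff.mpr (Or.inr hAC))
        rcases mem_fullNbhd_iff.mp hmem with h' | h'
        · exact absurd h' hCB
        · exact mem_fullNbhd_iff.mpr (Or.inr (all_adj h' b hb x (mem_cls x)))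

end Aux

theorem quotientGraph_connected_collapsed_closed {n : ℕ} (G : SimpleGraph (Fin n))
    (hconn : G.Connected) (hG : IsClosedLabeling G) :
    (quotientGraph G).Connected ∧
    (∀ A B : exchClasses G,
      fullNbhd (quotientGraph G) A = fullNbhd (quotientGraph G) B → A = B) ∧
    IsClosedWrt (quotientGraph G)
      (fun A B => ∀ a ∈ (A : Set (Fin n)), ∀ b ∈ (B : Set (Fin n)), a < b) := by
  refine ⟨?_, ?_, ?_⟩
  · -- connected
    have hne : Nonempty (exchClasses G) := by
      obtain ⟨v⟩ := hconn.nonempty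
      exact ⟨cls G v⟩
    haveI := hne
    refine SimpleGraph.Connected.mk ?_
    intro A B
    obtain ⟨vA, hvA⟩ := A.2
    obtain ⟨vB, hvB⟩ := B.2
    have hA : A = cls G vA := Subtype.ext hvA
    have hB : B = cls G vB := Subtype.ext hvB
    rw [hA, hB]
    obtain ⟨p⟩ := hconn vA vB
    exact reach_walk p
  · -- collapsed
    intro A B hfn
    by_contra hAB
    have hBmem : (B : exchClasses G) ∈ fullNbhd (quotientGraph G) A := by
      rw [hfn]; exact mem_fullNbhd_iff.mpr (Or.inl rfl)
    have hadj : (quotientGraph G).Adj A B := by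
      rcases mem_fullNbhd_iff.mp hBmem with h' | h'
      · exact absurd h'.symm hAB
      · exact h'
    obtain ⟨vA, hvA⟩ := A.2
    obtain ⟨vB, hvB⟩ := B.2
    have haA : vA ∈ (A : Set (Fin n)) := by rw [hvA]; exact Set.mem_setOf.mpr rfl
    have hbB : vB ∈ (B : Set (Fin n)) := by rw [hvB]; exact Set.mem_setOf.mpr rfl
    have h1 := key_subset hfn hadj haA hbB
    have h2 := key_subset hfn.symm hadj.symm hbB haA
    have heq : fullNbhd G vA = fullNbhd G vB := le_antisymm h1 h2
    have : vA ∈ (B : Set (Fin n)) := by rw [hvB]; exact Set.mem_setOf.mpr heq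
    exact hAB (classes_eq_of_mem haA this)
  · -- closed
    intro U V W hVU hVW hUW hord
    obtain ⟨vU, hvU⟩ := U.2
    obtain ⟨vV, hvV⟩ := V.2
    obtain ⟨vW, hvW⟩ := W.2
    have hu : vU ∈ (U : Set (Fin n)) := by rw [hvU]; exact Set.mem_setOf.mpr rfl
    have hv : vV ∈ (V : Set (Fin n)) := by rw [hvV]; exact Set.mem_setOf.mpr rfl
    have hw : vW ∈ (W : Set (Fin n)) := by rw [hvW]; exact Set.mem_setOf.mpr rfl
    have hvu : G.Adj vV vU := all_adj hVU vV hv vU hu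
    have hvw : G.Adj vV vW := all_adj hVW vV hv vW hw
    have huw : vU ≠ vW := fun e => hUW (classes_eq_of_mem hu (e ▸ hw))
    have hadj : G.Adj vU vW := by
      rcases hord with ⟨h1, h2⟩ | ⟨h1, h2⟩
      · exact hG vU vV vW hvu hvw huw (Or.inl ⟨h1 vV hv vU hu, h2 vV hv vW hw⟩)
      · exact hG vU vV vW hvu hvw huw (Or.inr ⟨h1 vU hu vV hv, h2 vW hw vV hv⟩)
    exact ⟨hUW, vU, hu, vW, hw, hadj⟩
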